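/- For an odd prime p, every automorphism of the group G_p = ⟨a,b | a^p=b^{p^2}=1, aba^{-1}=b^{p+1}⟩ is of the form b ↦ b^i a^j, a ↦ b^{mp} a, for some unit i in Z/p^2 and some j, m in Z/p. -/

import Mathlib

set_option linter.unusedSectionVars false

def Gp (p : ℕ) : Type := ZMod (p ^ 2) × ZMod p

namespace Gp

variable {p : ℕ} [NeZero p]

/-- `(p+1)^a` in `ZMod (p^2)`, computed as `1 + p·a`. -/
def u (a : ZMod p) : ZMod (p ^ 2) := 1 + (p : ZMod (p ^ 2)) * (a.val : ZMod (p ^ 2))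

lemma p_mul_p : (p : ZMod (p ^ 2)) * (p : ZMod (p ^ 2)) = 0 := by
  rw [← Nat.cast_mul, show p * p = p ^ 2 by ring, ZMod.natCast_self]

lemma pmul_mod (x : ℕ) :
    (p : ZMod (p ^ 2)) * ((x % p : ℕ) : ZMod (p ^ 2)) = (p : ZMod (p ^ 2)) * x := by
  conv_rhs => rw [← Nat.div_add_mod x p]
  push_cast
  linear_combination (-(x / p : ℕ) : ZMod (p ^ 2)) * p_mul_p (p := p)

lemma u_add (a b : ZMod p) : u (a + b) = u a * u b := by
  unfold u
  rw [ZMod.val_add, pmul_mod]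
  push_cast
  linear_combination (-(a.val : ZMod (p ^ 2)) * (b.val : ZMod (p ^ 2))) * p_mul_p (p := p)

lemma u_zero : u (0 : ZMod p) = 1 := by
  unfold u
  rw [ZMod.val_zero]
  push_cast
  ring

private def gmul (x y : Gp p) : Gp p := (x.1 + u x.2 * y.1, x.2 + y.2)

private def ginv (x : Gp p) : Gp p := (-(u (-x.2) * x.1), -x.2)

private def gone : Gp p := ((0 : ZMod (p ^ 2)), (0 : ZMod p))

instance : Group (Gp p) where
  mul := gmul
  one := gone
  inv := ginv
  mul_assoc x y z := by
    show gmul (gmul x y) z = gmul x (gmul y z)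
    unfold gmul
    refine Prod.ext ?_ ?_ <;> dsimp
    · rw [u_add]; ring
    · ring
  one_mul x := by
    show gmul gone x = x
    unfold gmul gone
    refine Prod.ext ?_ ?_ <;> dsimp
    · rw [u_zero]; ring
    · ring
  mul_one x := by
    show gmul x gone = x
    unfold gmul gone
    refine Prod.ext ?_ ?_ <;> dsimp <;> ring
  inv_mul_cancel x := by
    show gmul (ginv x) x = gone
    unfold gmul ginv gone
    refine Prod.ext ?_ ?_ <;> dsimp <;> ring

/-- the generator `a` of order `p`. -/
def a (p : ℕ) : Gp p := ((0 : ZMod (p ^ 2)), (1 : ZMod p))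

/-- the generator `b` of order `p^2`. -/
def b (p : ℕ) : Gp p := ((1 : ZMod (p ^ 2)), (0 : ZMod p))

end Gp

namespace Gp

variable {p : ℕ} [NeZero p]

lemma mul_def' (x y : Gp p) : x * y = (x.1 + u x.2 * y.1, x.2 + y.2) := rfl

lemma one_def' : (1 : Gp p) = ((0 : ZMod (p ^ 2)), (0 : ZMod p)) := rfl

lemma pmul_val_mul (c : ZMod p) (n : ℕ) :
    (p : ZMod (p ^ 2)) * ((((n : ZMod p) * c).val : ℕ) : ZMod (p ^ 2))
      = (p : ZMod (p ^ 2)) * (n : ZMod (p ^ 2)) * (c.val : ZMod (p ^ 2)) := by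
  rw [ZMod.val_mul, pmul_mod, ZMod.val_natCast]
  push_cast
  linear_combination (c.val : ZMod (p ^ 2)) * pmul_mod (p := p) n

lemma pow_formula (g : Gp p) (n : ℕ) :
    g ^ n = (((n : ZMod (p ^ 2)) + (p : ZMod (p ^ 2)) *
        ((∑ k ∈ Finset.range n, k : ℕ) : ZMod (p ^ 2)) * (g.2.val : ZMod (p ^ 2))) * g.1,
      (n : ZMod p) * g.2) := by
  induction n with
  | zero => simp [one_def']; rfl
  | succ n ih =>
      erw [pow_succ, ih, mul_def']
      refine Prod.ext ?_ ?_ <;> dsimp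
      · rw [Finset.sum_range_succ]
        unfold u
        rw [pmul_val_mul]
        push_cast
        ring
      · push_cast; ring

lemma pmul_of_dvd {s : ℕ} (hs : p ∣ s) :
    (p : ZMod (p ^ 2)) * (s : ZMod (p ^ 2)) = 0 := by
  obtain ⟨t, rfl⟩ := hs
  push_cast
  linear_combination (t : ZMod (p ^ 2)) * p_mul_p (p := p)

lemma p_dvd_sum_range (hodd : Odd p) : p ∣ ∑ k ∈ Finset.range p, k := by
  obtain ⟨k, hk⟩ := hodd
  refine ⟨k, Nat.eq_of_mul_eq_mul_right (show 0 < 2 by norm_num) ?_⟩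
  rw [Finset.sum_range_id_mul_two]
  have h1 : p - 1 = 2 * k := by omega
  rw [h1, hk]; ring

lemma pow_p (hodd : Odd p) (g : Gp p) :
    g ^ p = ((p : ZMod (p ^ 2)) * g.1, 0) := by
  rw [pow_formula, pmul_of_dvd (p_dvd_sum_range hodd)]
  simp; rfl

lemma pow_p_add_one (hodd : Odd p) (g : Gp p) :
    g ^ (p + 1) = (((p : ZMod (p ^ 2)) + 1) * g.1, g.2) := by
  rw [pow_formula, Finset.sum_range_succ,
    pmul_of_dvd (dvd_add (p_dvd_sum_range hodd) dvd_rfl)]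
  refine Prod.ext ?_ ?_ <;> dsimp
  · push_cast; ring
  · push_cast
    simp [ZMod.natCast_self]

lemma pow_b (n : ℕ) : (b p) ^ n = ((n : ZMod (p ^ 2)), 0) := by
  rw [pow_formula]
  simp [b]; rfl

lemma pow_a (n : ℕ) : (a p) ^ n = (0, (n : ZMod p)) := by
  rw [pow_formula]
  simp [a]; rfl

lemma val_one' (hp1 : 1 < p) : (1 : ZMod p).val = 1 := by
  rw [show (1 : ZMod p) = ((1 : ℕ) : ZMod p) by norm_num, ZMod.val_natCast]
  exact Nat.mod_eq_of_lt hp1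

lemma relation (hp1 : 1 < p) (hodd : Odd p) :
    a p * b p = b p ^ (p + 1) * a p := by
  erw [pow_p_add_one hodd, mul_def', mul_def']
  refine Prod.ext ?_ ?_ <;> dsimp [a, b]
  · rw [u_zero]
    unfold u
    rw [val_one' hp1]
    push_cast
    ring
  · ring

end Gp

/-- For an odd prime `p`, every automorphism of the group
`G_p = ⟨a, b | aᵖ = b^{p²} = 1, a b a⁻¹ = b^{p+1}⟩` has the form
`b ↦ bⁱ aʲ`, `a ↦ b^{mp} a` for some unit `i` of `Z/p²` and some
`j, m ∈ Z/p`. -/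
theorem gp_aut_form (p : ℕ) (hp : p.Prime) (hodd : Odd p) [NeZero p]
    (f : MulAut (Gp p)) :
    ∃ (i : (ZMod (p ^ 2))ˣ) (j m : ZMod p),
      f (Gp.b p) = Gp.b p ^ ((i : ZMod (p ^ 2)).val) * Gp.a p ^ j.val ∧
      f (Gp.a p) = Gp.b p ^ (m.val * p) * Gp.a p := by
  haveI : NeZero (p ^ 2) := ⟨pow_ne_zero 2 (NeZero.ne p)⟩
  have hp1 : 1 < p := hp.one_lt
  have hppos : 0 < p := hp.pos
  set z := (f (Gp.b p)).1 with hz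
  set w := (f (Gp.b p)).2 with hw
  set x := (f (Gp.a p)).1 with hx
  set y := (f (Gp.a p)).2 with hy
  -- f(a)^p = 1 gives p * x = 0
  have ha_p : (Gp.a p) ^ p = 1 := by
    rw [Gp.pow_p hodd]
    simp [Gp.a, Gp.one_def']; rfl
  have h1 : (p : ZMod (p ^ 2)) * x = 0 := by
    have h2 : (f (Gp.a p)) ^ p = 1 := by rw [← map_pow, ha_p, map_one]
    rw [Gp.pow_p hodd, Gp.one_def'] at h2
    exact (Prod.ext_iff.mp h2).1
  have hxval : p ∣ x.val := by
    have hc : ((p * x.val : ℕ) : ZMod (p ^ 2)) = 0 := by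
      push_cast
      rw [ZMod.natCast_val, ZMod.cast_id]
      exact h1
    rw [ZMod.natCast_eq_zero_iff] at hc
    obtain ⟨t, ht⟩ := hc
    refine ⟨t, Nat.eq_of_mul_eq_mul_left hppos ?_⟩
    rw [ht]; ring
  -- f(b)^p ≠ 1 gives z is a unit
  have hbp : (Gp.b p) ^ p ≠ 1 := by
    rw [Gp.pow_p hodd, Gp.one_def', Gp.b]
    intro h
    have h' : (p : ZMod (p ^ 2)) = 0 := by
      have := (Prod.ext_iff.mp h).1
      simpa using this
    rw [ZMod.natCast_eq_zero_iff] at h'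
    have := Nat.le_of_dvd hppos h'
    nlinarith
  have hzeq : z = ((z.val : ℕ) : ZMod (p ^ 2)) := by
    rw [ZMod.natCast_val, ZMod.cast_id]
  have hz0 : (p : ZMod (p ^ 2)) * z ≠ 0 := by
    intro h
    apply hbp
    apply f.injective
    rw [map_pow, map_one, Gp.pow_p hodd, Gp.one_def']
    exact Prod.ext h rfl
  have hpz : ¬ p ∣ z.val := by
    intro hd
    apply hz0
    obtain ⟨t, ht⟩ := hd
    rw [hzeq, ht]
    push_cast
    linear_combination (t : ZMod (p ^ 2)) * Gp.p_mul_p (p := p)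
  have hzu : IsUnit z := by
    rw [hzeq, ZMod.isUnit_iff_coprime]
    exact Nat.Coprime.pow_right 2 ((hp.coprime_iff_not_dvd.mpr hpz).symm)
  -- conjugation relation forces y = 1
  have hrel2 : f (Gp.a p) * f (Gp.b p) = f (Gp.b p) ^ (p + 1) * f (Gp.a p) := by
    rw [← map_pow, ← map_mul, ← map_mul, Gp.relation hp1 hodd]
  erw [Gp.pow_p_add_one hodd, Gp.mul_def', Gp.mul_def'] at hrel2
  have h3 := (Prod.ext_iff.mp hrel2).1
  unfold Gp.u at h3
  have h4 : (p : ZMod (p ^ 2)) * (y.val : ZMod (p ^ 2)) * z = (p : ZMod (p ^ 2)) * z := by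
    linear_combination h3 + (w.val : ZMod (p ^ 2)) * h1
  have h5 : (p : ZMod (p ^ 2)) * (y.val : ZMod (p ^ 2)) = (p : ZMod (p ^ 2)) := by
    exact hzu.mul_right_cancel h4
  have hyval : y.val = 1 := by
    have hlt : p * y.val < p ^ 2 := by
      have := ZMod.val_lt y
      nlinarith
    have hlt2 : p * 1 < p ^ 2 := by nlinarith
    have h6 : p * y.val = p * 1 := by
      calc p * y.val = ((p * y.val : ℕ) : ZMod (p ^ 2)).val := (ZMod.val_cast_of_lt hlt).symm
        _ = ((p * 1 : ℕ) : ZMod (p ^ 2)).val := by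
            congr 1
            simp only [Nat.cast_mul, Nat.cast_one, mul_one]
            exact h5
        _ = p * 1 := ZMod.val_cast_of_lt hlt2
    exact Nat.eq_of_mul_eq_mul_left hppos h6
  have hy1 : y = 1 := by
    calc y = ((y.val : ℕ) : ZMod p) := by rw [ZMod.natCast_val, ZMod.cast_id]
      _ = 1 := by rw [hyval]; norm_num
  -- assemble witnesses
  refine ⟨hzu.unit, w, ((x.val / p : ℕ) : ZMod p), ?_, ?_⟩
  · erw [IsUnit.unit_spec, Gp.pow_b, Gp.pow_a, Gp.mul_def']
    refine Prod.ext ?_ ?_ <;> dsimp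
    · rw [Gp.u_zero, ZMod.natCast_val, ZMod.cast_id]
      ring
    · rw [ZMod.natCast_val, ZMod.cast_id]
      ring
  · have hmval : (((x.val / p : ℕ) : ZMod p)).val = x.val / p := by
      apply ZMod.val_cast_of_lt
      rw [Nat.div_lt_iff_lt_mul hppos]
      have := ZMod.val_lt x
      nlinarith
    erw [hmval, Gp.pow_b, Gp.mul_def']
    have ha1 : (Gp.a p).1 = 0 := rfl
    have ha2 : (Gp.a p).2 = 1 := rfl
    refine Prod.ext ?_ ?_ <;> dsimp
    · rw [ha1, Gp.u_zero, Nat.div_mul_cancel hxval, ZMod.natCast_val, ZMod.cast_id]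
      ring
    · rw [ha2, ← hy, hy1]; ring
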